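/- Let p be a prime, k > 0, and n ∈ {p^k, 2p^k} (with p odd in the second case). Let G be a non-empty circulant graph on n vertices with independence polynomial I(G, x) = Σ_{i=0}^n f_{i-1} x^i, where f_{i-1} is the number of independent sets of G of cardinality i. Then I(G, −1) ≠ 0, i.e., −1 is not a root of the independence polynomial. -/

import Mathlib

/-- Circular distance on `ZMod n`. -/
def circDist (n : ℕ) (a b : ZMod n) : ℕ := min (a - b).val (b - a).val

/-- The circulant graph `C_n(S)`. -/
def circGraph (n : ℕ) (S : Set ℕ) : SimpleGraph (ZMod n) where
  Adj a b := a ≠ b ∧ circDist n a b ∈ S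
  symm := by
    constructor
    intro a b h
    exact ⟨h.1.symm, by simpa [circDist, min_comm] using h.2⟩
  loopless := by constructor; intro a h; exact h.1 rfl

/-- `A` is an independent set of `C_n(S)`. -/
def IsIndepSet' (n : ℕ) (S : Set ℕ) (A : Finset (ZMod n)) : Prop :=
  ∀ a ∈ A, ∀ b ∈ A, ¬ (circGraph n S).Adj a b

/-- `A` is a clique of `C_n(S)`. -/
def IsClique' (n : ℕ) (S : Set ℕ) (A : Finset (ZMod n)) : Prop :=
  ∀ a ∈ A, ∀ b ∈ A, a ≠ b → (circGraph n S).Adj a b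

/-- The number of independent sets of cardinality `i` (this is `f_{i-1}`). -/
noncomputable def indepCount (n : ℕ) (S : Set ℕ) (i : ℕ) : ℕ :=
  Nat.card {A : Finset (ZMod n) // A.card = i ∧ IsIndepSet' n S A}

/-- The number of cliques of cardinality `i`. -/
noncomputable def cliqueCount (n : ℕ) (S : Set ℕ) (i : ℕ) : ℕ :=
  Nat.card {A : Finset (ZMod n) // A.card = i ∧ IsClique' n S A}

/-- The reduced Euler characteristic of the independence complex of `C_n(S)`. -/
noncomputable def redEuler (n : ℕ) (S : Set ℕ) : ℤ :=
  ∑ i ∈ Finset.range (n + 1), (-1) ^ (i + 1) * (indepCount n S i : ℤ)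

open Finset

lemma orbit_aux {α : Type*} [DecidableEq α] {p : ℕ} (hp : p.Prime)
    (σ : α → α) (hper : ∀ a, σ^[p] a = a) (f : α → ℤ) (hf : ∀ a, f (σ a) = f a) :
    ∀ N (T : Finset α), T.card ≤ N → (∀ a ∈ T, σ a ∈ T) → (∀ a ∈ T, σ a ≠ a) →
      (p : ℤ) ∣ ∑ a ∈ T, f a := by
  have hfiter : ∀ j a, f (σ^[j] a) = f a := by
    intro j
    induction j with
    | zero => intro a; rfl
    | succ j ih => intro a; rw [Function.iterate_succ_apply, ih, hf]
  have hmod : ∀ (i : ℕ) a, σ^[i] a = σ^[i % p] a := by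
    intro i a
    exact (Function.IsPeriodicPt.iterate_mod_apply (hper a) i).symm
  intro N
  induction N with
  | zero =>
    intro T hcard _ _
    rw [Nat.le_zero, Finset.card_eq_zero] at hcard
    simp [hcard]
  | succ N ih =>
    intro T hcard hTinv hTnf
    rcases T.eq_empty_or_nonempty with rfl | ⟨a, ha⟩
    · simp
    · set O : Finset α := (Finset.range p).image (fun j => σ^[j] a) with hO
      have hmin : Function.minimalPeriod σ a = p := by
        have h1 : Function.IsPeriodicPt σ p a := hper a
        have h2 := Function.IsPeriodicPt.minimalPeriod_dvd h1
        rcases (Nat.Prime.eq_one_or_self_of_dvd hp _ h2) with h | h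
        · exfalso
          have := Function.minimalPeriod_eq_one_iff_isFixedPt.mp h
          exact hTnf a ha this
        · exact h
      have hinj : Set.InjOn (fun j => σ^[j] a) (Finset.range p : Set ℕ) := by
        have h3 := Function.iterate_injOn_Iio_minimalPeriod (f := σ) (x := a)
        rw [hmin] at h3
        intro i hi j hj hij
        exact h3 (by simpa using hi) (by simpa using hj) hij
      have hOcard : O.card = p := by
        rw [hO, Finset.card_image_of_injOn hinj, Finset.card_range]
      have hOsub : O ⊆ T := by
        intro x hx
        rw [hO, Finset.mem_image] at hx
        obtain ⟨j, hj, rfl⟩ := hx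
        clear hj
        induction j with
        | zero => simpa using ha
        | succ j ihj =>
          rw [Function.iterate_succ_apply']
          exact hTinv _ ihj
      have hOsum : ∑ x ∈ O, f x = p * f a := by
        rw [hO, Finset.sum_image hinj]
        simp [hfiter, Finset.sum_const, Finset.card_range, mul_comm]
      have hsplit : ∑ x ∈ T, f x = ∑ x ∈ T \ O, f x + ∑ x ∈ O, f x :=
        (Finset.sum_sdiff hOsub).symm
      have haO : a ∈ O := by
        rw [hO, Finset.mem_image]
        exact ⟨0, by simp [hp.pos], rfl⟩
      have hrest : (p : ℤ) ∣ ∑ x ∈ T \ O, f x := by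
        apply ih
        · have h4 : (T \ O).card = T.card - p := by
            rw [Finset.card_sdiff_of_subset hOsub, hOcard]
          rw [h4]
          have := Finset.card_pos.mpr ⟨a, haO⟩
          omega
        · intro x hx
          rw [Finset.mem_sdiff] at hx ⊢
          refine ⟨hTinv _ hx.1, ?_⟩
          intro hcon
          apply hx.2
          rw [hO, Finset.mem_image] at hcon
          obtain ⟨j, hj, hjx⟩ := hcon
          have h5 : σ^[p - 1] (σ x) = x := by
            have h6 : p - 1 + 1 = p := by have := hp.pos; omega
            have h7 := Function.iterate_add_apply σ (p - 1) 1 x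
            simp only [Function.iterate_one] at h7
            rw [← h7, h6]
            exact hper x
          rw [← h5, ← hjx, ← Function.iterate_add_apply]
          rw [hO, Finset.mem_image]
          exact ⟨(p - 1 + j) % p, by simp [Nat.mod_lt _ hp.pos], (hmod _ a).symm⟩
        · intro x hx
          exact hTnf x (Finset.mem_sdiff.mp hx).1
      rw [hsplit]
      exact dvd_add hrest ⟨f a, by rw [hOsum]⟩

lemma orbit_sum {α : Type*} [DecidableEq α] {p : ℕ} (hp : p.Prime)
    (σ : α → α) (hper : ∀ a, σ^[p] a = a)
    (T : Finset α) (hT : ∀ a ∈ T, σ a ∈ T)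
    (f : α → ℤ) (hf : ∀ a, f (σ a) = f a) :
    ∑ a ∈ T, f a ≡ ∑ a ∈ T.filter (fun a => σ a = a), f a [ZMOD p] := by
  classical
  have hinj : Function.Injective σ := by
    intro x y hxy
    have hx : σ^[p - 1] (σ x) = x := by
      have h1 : p - 1 + 1 = p := by have := hp.pos; omega
      have h7 := Function.iterate_add_apply σ (p - 1) 1 x
      simp only [Function.iterate_one] at h7
      rw [← h7, h1]
      exact hper x
    have hy : σ^[p - 1] (σ y) = y := by
      have h1 : p - 1 + 1 = p := by have := hp.pos; omega
      have h7 := Function.iterate_add_apply σ (p - 1) 1 y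
      simp only [Function.iterate_one] at h7
      rw [← h7, h1]
      exact hper y
    rw [← hx, ← hy, hxy]
  have hsplit := Finset.sum_filter_add_sum_filter_not T (fun a => σ a = a) f
  have hdvd : (p : ℤ) ∣ ∑ a ∈ T.filter (fun a => ¬ σ a = a), f a := by
    apply orbit_aux hp σ hper f hf (T.filter (fun a => ¬ σ a = a)).card _ le_rfl
    · intro a ha
      rw [Finset.mem_filter] at ha ⊢
      refine ⟨hT _ ha.1, ?_⟩
      intro hcon
      exact ha.2 (hinj hcon)
    · intro a ha
      exact (Finset.mem_filter.mp ha).2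
  have hkey : ∑ a ∈ T, f a - ∑ a ∈ T.filter (fun a => σ a = a), f a
      = ∑ a ∈ T.filter (fun a => ¬ σ a = a), f a := by
    rw [← hsplit]; ring
  exact (Int.modEq_iff_dvd.mpr (by rw [hkey]; exact hdvd)).symm


lemma indep_iff (n : ℕ) (S : Set ℕ) (A : Finset (ZMod n)) :
    IsIndepSet' n S A ↔ ∀ a ∈ A, ∀ b ∈ A, a ≠ b → circDist n a b ∉ S := by
  constructor
  · intro h a ha b hb hab hd; exact h a ha b hb ⟨hab, hd⟩
  · intro h a ha b hb hc; exact h a ha b hb hc.1 hc.2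

lemma circDist_add_right (n : ℕ) (a b t : ZMod n) :
    circDist n (a + t) (b + t) = circDist n a b := by
  simp [circDist, add_sub_add_right_eq_sub]

lemma circDist_neg (n : ℕ) (a b : ZMod n) :
    circDist n (-a) (-b) = circDist n a b := by
  show min ((-a) - (-b)).val ((-b) - (-a)).val = _
  rw [neg_sub_neg, neg_sub_neg]
  exact min_comm _ _

-- signed/weighted sum over independent sets
open Classical in
noncomputable def qsum (n : ℕ) [NeZero n] (S : Set ℕ) (w : ℤ) : ℤ :=
  ∑ A ∈ Finset.univ.filter (fun A : Finset (ZMod n) => IsIndepSet' n S A), w ^ A.card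

-- preimage of a subset of `ZMod m` in `ZMod n`
open Classical in
noncomputable def liftF (n m : ℕ) [NeZero n] (B : Finset (ZMod m)) : Finset (ZMod n) :=
  Finset.univ.filter (fun x => ((x.val : ZMod m)) ∈ B)

/-- The derived connection set on the quotient `ZMod m`. -/
def derivedS (n m : ℕ) (S : Set ℕ) : Set ℕ :=
  {d | ∃ x y : ZMod n, ((x.val : ZMod m)) ≠ ((y.val : ZMod m)) ∧ circDist n x y ∈ S ∧
    circDist m ((x.val : ZMod m)) ((y.val : ZMod m)) = d}

lemma mem_liftF {n m : ℕ} [NeZero n] {B : Finset (ZMod m)} {x : ZMod n} :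
    x ∈ liftF n m B ↔ ((x.val : ZMod m)) ∈ B := by
  simp [liftF]

lemma circDist_bounds {m : ℕ} [NeZero m] {a b : ZMod m} (hab : a ≠ b) :
    1 ≤ circDist m a b ∧ circDist m a b ≤ m / 2 := by
  haveI : NeZero (a - b) := ⟨sub_ne_zero.mpr hab⟩
  have h1 : (b - a) = -(a - b) := by ring
  have h3 : (-(a - b)).val = m - (a - b).val := ZMod.val_neg_of_ne_zero _
  have h4 : 0 < (a - b).val :=
    Nat.pos_of_ne_zero (fun hh => (sub_ne_zero.mpr hab) ((ZMod.val_eq_zero _).mp hh))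
  have h5 : (a - b).val < m := ZMod.val_lt _
  show 1 ≤ min (a - b).val (b - a).val ∧ min (a - b).val (b - a).val ≤ m / 2
  rw [h1, h3]
  omega

lemma circDist_cases {m : ℕ} [NeZero m] {a b x y : ZMod m} (hab : a ≠ b) (hxy : x ≠ y)
    (h : circDist m a b = circDist m x y) : a - b = x - y ∨ a - b = y - x := by
  haveI : NeZero (a - b) := ⟨sub_ne_zero.mpr hab⟩
  haveI : NeZero (x - y) := ⟨sub_ne_zero.mpr hxy⟩
  have h1 : (b - a) = -(a - b) := by ring
  have h2 : (y - x) = -(x - y) := by ring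
  have h3 : (-(a - b)).val = m - (a - b).val := ZMod.val_neg_of_ne_zero _
  have h4 : (-(x - y)).val = m - (x - y).val := ZMod.val_neg_of_ne_zero _
  have h5 : circDist m a b = min (a - b).val (m - (a - b).val) := by
    show min (a - b).val (b - a).val = _
    rw [h1, h3]
  have h6 : circDist m x y = min (x - y).val (m - (x - y).val) := by
    show min (x - y).val (y - x).val = _
    rw [h2, h4]
  have ha1 : 0 < (a - b).val :=
    Nat.pos_of_ne_zero (fun hh => (sub_ne_zero.mpr hab) ((ZMod.val_eq_zero _).mp hh))
  have hx1 : 0 < (x - y).val :=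
    Nat.pos_of_ne_zero (fun hh => (sub_ne_zero.mpr hxy) ((ZMod.val_eq_zero _).mp hh))
  have ha2 : (a - b).val < m := ZMod.val_lt _
  have hx2 : (x - y).val < m := ZMod.val_lt _
  have hvals : (a - b).val = (x - y).val ∨ (a - b).val = m - (x - y).val := by
    rw [h5, h6] at h
    omega
  rcases hvals with hv | hv
  · left
    exact ZMod.val_injective m hv
  · right
    have hv2 : (a - b).val = (-(x - y)).val := by rw [h4]; exact hv
    have hv3 := ZMod.val_injective m hv2
    rw [hv3, h2]

theorem step (p m n : ℕ) [NeZero n] [NeZero m] (hp : p.Prime) (hn : n = m * p)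
    (S : Set ℕ) (hS : S ⊆ Set.Icc 1 (n / 2)) (w : ℤ) :
    qsum n S w ≡ 1 [ZMOD p] ∨
    (qsum n S w ≡ qsum m (derivedS n m S) (w ^ p) [ZMOD p] ∧
      derivedS n m S ⊆ Set.Icc 1 (m / 2) ∧ (S.Nonempty → (derivedS n m S).Nonempty)) := by
  classical
  have hm : 0 < m := Nat.pos_of_ne_zero (NeZero.ne m)
  set c : ZMod n := (m : ZMod n) with hc
  set σ : Finset (ZMod n) → Finset (ZMod n) := fun A => A.image (· + c) with hσ
  set π : ZMod n → ZMod m := fun x => ((x.val : ZMod m)) with hπ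
  have hmdvd : m ∣ n := ⟨p, hn⟩
  -- π is the ring hom cast
  have hπhom : ∀ x : ZMod n, π x = ZMod.castHom hmdvd (ZMod m) x := by
    intro x
    simp only [hπ, ZMod.castHom_apply]
    exact ZMod.natCast_val x
  have hπadd : ∀ x y : ZMod n, π (x + y) = π x + π y := by
    intro x y; rw [hπhom, hπhom, hπhom, map_add]
  have hπsub : ∀ x y : ZMod n, π (x - y) = π x - π y := by
    intro x y; rw [hπhom, hπhom, hπhom, map_sub]
  have hπneg : ∀ x : ZMod n, π (-x) = -π x := by
    intro x; rw [hπhom, hπhom, map_neg]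
  have hπnat : ∀ a : ℕ, π (a : ZMod n) = (a : ZMod m) := by
    intro a; rw [hπhom, map_natCast]
  have hπc : π c = 0 := by rw [hc, hπnat, ZMod.natCast_self]
  have hπliftval : ∀ b : ZMod m, π ((b.val : ZMod n)) = b := by
    intro b; rw [hπnat, ZMod.natCast_rightInverse b]
  -- iterates of σ
  have hiter : ∀ (j : ℕ) (A : Finset (ZMod n)),
      σ^[j] A = A.image (fun x => x + ((j * m : ℕ) : ZMod n)) := by
    intro j
    induction j with
    | zero => intro A; simp
    | succ j ih =>
      intro A
      rw [Function.iterate_succ_apply', ih]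
      show ((A.image (fun x => x + ((j * m : ℕ) : ZMod n))).image (fun x => x + c))
        = A.image (fun x => x + (((j + 1) * m : ℕ) : ZMod n))
      rw [Finset.image_image]
      congr 1
      funext x
      show x + ((j * m : ℕ) : ZMod n) + c = x + (((j+1) * m : ℕ) : ZMod n)
      rw [hc]
      push_cast
      ring
  have hper : ∀ A, σ^[p] A = A := by
    intro A
    rw [hiter]
    have h0 : ((p * m : ℕ) : ZMod n) = 0 := by
      rw [mul_comm, ← hn, ZMod.natCast_self]
    rw [h0]
    simp
  -- independence is translation invariant
  have hindep_tr : ∀ (t : ZMod n) (A : Finset (ZMod n)),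
      IsIndepSet' n S A → IsIndepSet' n S (A.image (· + t)) := by
    intro t A hA
    rw [indep_iff] at hA ⊢
    intro a ha b hb hab
    rw [Finset.mem_image] at ha hb
    obtain ⟨a', ha', rfl⟩ := ha
    obtain ⟨b', hb', rfl⟩ := hb
    rw [circDist_add_right]
    exact hA a' ha' b' hb' (fun h => hab (by rw [h]))
  have hindep_iff_tr : ∀ (t : ZMod n) (A : Finset (ZMod n)),
      IsIndepSet' n S (A.image (· + t)) ↔ IsIndepSet' n S A := by
    intro t A
    constructor
    · intro h
      have h2 := hindep_tr (-t) _ h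
      rw [Finset.image_image] at h2
      have : ((fun x => x + -t) ∘ (fun x => x + t)) = id := by
        funext x; simp
      rw [this, Finset.image_id] at h2
      exact h2
    · exact hindep_tr t A
  -- the invariant family
  set T : Finset (Finset (ZMod n)) :=
    Finset.univ.filter (fun A => IsIndepSet' n S A) with hT
  have hTinv : ∀ A ∈ T, σ A ∈ T := by
    intro A hA
    rw [hT, Finset.mem_filter] at hA ⊢
    exact ⟨Finset.mem_univ _, hindep_tr c A hA.2⟩
  have hcard_σ : ∀ A : Finset (ZMod n), (σ A).card = A.card := by
    intro A
    exact Finset.card_image_of_injective A (add_left_injective c)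
  have horb := orbit_sum hp σ hper T hTinv (fun A => w ^ A.card)
    (fun A => by show w ^ (σ A).card = w ^ A.card; rw [hcard_σ])
  have hqsum : qsum n S w = ∑ A ∈ T, w ^ A.card := by
    rw [qsum, hT]
  -- closure of fixed sets
  have hfixclo : ∀ A : Finset (ZMod n), σ A = A → ∀ y ∈ A, ∀ j : ℕ,
      y + ((j * m : ℕ) : ZMod n) ∈ A := by
    intro A hA y hy j
    have h1 : σ^[j] A = A := by
      clear hiter
      induction j with
      | zero => rfl
      | succ j ih => rw [Function.iterate_succ_apply', ih, hA]
    rw [← h1, hiter]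
    exact Finset.mem_image_of_mem _ hy
  have hker : ∀ z : ZMod n, π z = 0 → ∃ j : ℕ, z = ((j * m : ℕ) : ZMod n) := by
    intro z hz
    rw [hπ] at hz
    rw [ZMod.natCast_eq_zero_iff] at hz
    obtain ⟨j, hj⟩ := hz
    refine ⟨j, ?_⟩
    rw [mul_comm j m, ← hj, ZMod.natCast_rightInverse z]
  -- fixed point correspondence
  have h1 : ∀ B : Finset (ZMod m), σ (liftF n m B) = liftF n m B := by
    intro B
    ext x
    rw [hσ]
    simp only [Finset.mem_image]
    constructor
    · rintro ⟨y, hy, rfl⟩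
      rw [mem_liftF] at hy ⊢
      have : ((((y + c).val : ZMod m))) = π (y + c) := rfl
      rw [this, hπadd, hπc, add_zero]
      exact hy
    · intro hx
      refine ⟨x - c, ?_, by ring⟩
      rw [mem_liftF] at hx ⊢
      have h3 : (((x - c).val : ZMod m)) = π (x - c) := rfl
      rw [h3, hπsub, hπc, sub_zero]
      exact hx
  have h2 : ∀ A : Finset (ZMod n), σ A = A → liftF n m (A.image π) = A := by
    intro A hA
    ext x
    rw [mem_liftF]
    constructor
    · intro hx
      have hx' : π x ∈ A.image π := hx
      rw [Finset.mem_image] at hx'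
      obtain ⟨y, hy, hyx⟩ := hx'
      have h3 : π (x - y) = 0 := by rw [hπsub, hyx, sub_self]
      obtain ⟨j, hj⟩ := hker _ h3
      have : x = y + ((j * m : ℕ) : ZMod n) := by rw [← hj]; ring
      rw [this]
      exact hfixclo A hA y hy j
    · intro hx
      exact Finset.mem_image_of_mem π hx
  have h3 : ∀ B : Finset (ZMod m), (liftF n m B).image π = B := by
    intro B
    ext b
    rw [Finset.mem_image]
    constructor
    · rintro ⟨x, hx, rfl⟩
      exact mem_liftF.mp hx
    · intro hb
      refine ⟨((b.val : ZMod n)), ?_, hπliftval b⟩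
      rw [mem_liftF]
      show π _ ∈ B
      rw [hπliftval b]
      exact hb
  -- cardinality of lifts
  have hfibercard : ∀ b : ZMod m, (Finset.univ.filter (fun x : ZMod n => π x = b)).card = p := by
    intro b
    have heq : Finset.univ.filter (fun x : ZMod n => π x = b)
        = (Finset.range p).image (fun j => ((b.val + j * m : ℕ) : ZMod n)) := by
      ext x
      simp only [Finset.mem_filter, Finset.mem_univ, true_and, Finset.mem_image,
        Finset.mem_range]
      constructor
      · intro hx
        have hvm : x.val % m = b.val := by
          have h4 : (((x.val : ℕ) : ZMod m)).val = b.val := congrArg ZMod.val hx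
          rwa [ZMod.val_natCast] at h4
        refine ⟨x.val / m, ?_, ?_⟩
        · have h5 : x.val < m * p := lt_of_lt_of_eq (ZMod.val_lt x) hn
          exact Nat.div_lt_of_lt_mul h5
        · have h7 : b.val + x.val / m * m = x.val := by
            rw [← hvm]
            exact Nat.mod_add_div' x.val m
          rw [h7, ZMod.natCast_rightInverse x]
      · rintro ⟨j, hj, rfl⟩
        rw [hπnat]
        push_cast
        rw [ZMod.natCast_self, mul_zero, add_zero, ZMod.natCast_rightInverse b]
    rw [heq]
    rw [Finset.card_image_of_injOn, Finset.card_range]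
    intro i hi j hj hij
    simp only at hij
    simp only [Finset.coe_range, Set.mem_Iio] at hi hj
    have hlt : ∀ k : ℕ, k < p → b.val + k * m < n := by
      intro k hk
      have h8 : b.val < m := ZMod.val_lt b
      calc b.val + k * m < m + k * m := by omega
        _ = (k + 1) * m := by ring
        _ ≤ p * m := Nat.mul_le_mul_right m (by omega)
        _ = n := by rw [hn, mul_comm]
    have hvi := ZMod.val_cast_of_lt (hlt i hi)
    have hvj := ZMod.val_cast_of_lt (hlt j hj)
    have : b.val + i * m = b.val + j * m := by
      rw [← hvi, ← hvj]
      exact congrArg ZMod.val hij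
    have h9 : i * m = j * m := by omega
    exact Nat.eq_of_mul_eq_mul_right hm h9
  have hcardlift : ∀ B : Finset (ZMod m), (liftF n m B).card = p * B.card := by
    intro B
    rw [Finset.card_eq_sum_card_fiberwise (f := π) (t := B)
      (fun x hx => mem_liftF.mp hx)]
    have hfib : ∀ b ∈ B, ((liftF n m B).filter (fun x => π x = b)).card = p := by
      intro b hb
      have : (liftF n m B).filter (fun x => π x = b)
          = Finset.univ.filter (fun x : ZMod n => π x = b) := by
        ext x
        simp only [Finset.mem_filter, Finset.mem_univ, true_and, mem_liftF]
        constructor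
        · exact fun h => h.2
        · intro h
          refine ⟨?_, h⟩
          show π x ∈ B
          rw [h]; exact hb
      rw [this, hfibercard]
    rw [Finset.sum_congr rfl hfib, Finset.sum_const, smul_eq_mul, mul_comm]
  -- reindex the fixed-point sum
  have hfix : ∑ A ∈ T.filter (fun A => σ A = A), w ^ A.card
      = ∑ B ∈ Finset.univ.filter (fun B : Finset (ZMod m) =>
          IsIndepSet' n S (liftF n m B)), (w ^ p) ^ B.card := by
    apply Finset.sum_nbij' (i := fun A => A.image π) (j := liftF n m)
    · intro A hA
      rw [hT, Finset.filter_filter, Finset.mem_filter] at hA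
      rw [Finset.mem_filter]
      refine ⟨Finset.mem_univ _, ?_⟩
      rw [h2 A hA.2.2]
      exact hA.2.1
    · intro B hB
      rw [Finset.mem_filter] at hB
      rw [Finset.mem_filter, hT, Finset.mem_filter]
      exact ⟨⟨Finset.mem_univ _, hB.2⟩, h1 B⟩
    · intro A hA
      rw [Finset.mem_filter] at hA
      exact h2 A hA.2
    · intro B _
      exact h3 B
    · intro A hA
      rw [Finset.mem_filter] at hA
      have : A.card = p * (A.image π).card := by
        conv_lhs => rw [← h2 A hA.2]
        rw [hcardlift]
      rw [this, pow_mul]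
  -- split on whether some fiber contains an edge
  have horb' : qsum n S w ≡ ∑ A ∈ T.filter (fun A => σ A = A), w ^ A.card [ZMOD p] := by
    rw [hqsum]
    exact horb
  by_cases hbad : ∃ x y : ZMod n, π x = π y ∧ x ≠ y ∧ circDist n x y ∈ S
  · -- bad case: the only independent lift is of ∅
    left
    obtain ⟨x, y, hxy, hne, hdS⟩ := hbad
    have honly : ∀ B : Finset (ZMod m), IsIndepSet' n S (liftF n m B) → B = ∅ := by
      intro B hB
      by_contra hBne
      obtain ⟨b, hb⟩ := Finset.nonempty_iff_ne_empty.mpr hBne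
      set t : ZMod n := ((b.val : ZMod n)) - x with ht
      have hx' : x + t ∈ liftF n m B := by
        rw [mem_liftF]
        show π (x + t) ∈ B
        have he : x + t = ((b.val : ZMod n)) := by rw [ht]; ring
        rw [he, hπliftval]
        exact hb
      have hy' : y + t ∈ liftF n m B := by
        rw [mem_liftF]
        show π (y + t) ∈ B
        have he : π (y + t) = b := by
          rw [hπadd, ht, hπsub, hπliftval, ← hxy]
          ring
        rw [he]
        exact hb
      have hne2 : x + t ≠ y + t := fun h => hne (by
        have := add_right_cancel h
        exact this)
      have hadj : circDist n (x + t) (y + t) ∈ S := by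
        rw [circDist_add_right]
        exact hdS
      exact (indep_iff n S _).mp hB _ hx' _ hy' hne2 hadj
    have hf : Finset.univ.filter (fun B : Finset (ZMod m) =>
        IsIndepSet' n S (liftF n m B)) = {∅} := by
      ext B
      simp only [Finset.mem_filter, Finset.mem_univ, true_and, Finset.mem_singleton]
      constructor
      · exact honly B
      · rintro rfl
        have hle : liftF n m (∅ : Finset (ZMod m)) = ∅ := by
          ext x; simp [mem_liftF]
        rw [hle]
        intro a ha
        exact absurd ha (Finset.notMem_empty a)
    have hone : ∑ B ∈ Finset.univ.filter (fun B : Finset (ZMod m) =>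
        IsIndepSet' n S (liftF n m B)), (w ^ p) ^ B.card = 1 := by
      rw [hf]
      simp
    have := horb'
    rw [hfix, hone] at this
    exact this
  · -- good case
    right
    push_neg at hbad
    have hiff : ∀ B : Finset (ZMod m),
        IsIndepSet' n S (liftF n m B) ↔ IsIndepSet' m (derivedS n m S) B := by
      intro B
      constructor
      · intro hL
        rw [indep_iff]
        intro a ha b hb hab hdmem
        obtain ⟨x, y, hxyne, hxyS, hdist⟩ := hdmem
        have hxyne' : π x ≠ π y := hxyne
        have hdist' : circDist m (π x) (π y) = circDist m a b := hdist
        have hwit : ∃ x' y' : ZMod n, π x' - π y' = a - b ∧ circDist n x' y' ∈ S := by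
          rcases circDist_cases hxyne' hab hdist' with hcase | hcase
          · exact ⟨x, y, hcase, hxyS⟩
          · refine ⟨-x, -y, ?_, ?_⟩
            · rw [hπneg, hπneg]
              rw [show -π x - -π y = -(π x - π y) by ring, hcase]
              ring
            · rw [circDist_neg]
              exact hxyS
        obtain ⟨x', y', hsub, hS'⟩ := hwit
        set t : ZMod n := (((a - π x').val : ZMod n)) with ht
        have hπt : π t = a - π x' := hπliftval _
        have hx'' : x' + t ∈ liftF n m B := by
          rw [mem_liftF]
          show π (x' + t) ∈ B
          have he : π (x' + t) = a := by rw [hπadd, hπt]; ring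
          rw [he]; exact ha
        have hy'' : y' + t ∈ liftF n m B := by
          rw [mem_liftF]
          show π (y' + t) ∈ B
          have he : π (y' + t) = b := by
            rw [hπadd, hπt]
            have : π y' = π x' - (a - b) := by rw [← hsub]; ring
            rw [this]
            ring
          rw [he]; exact hb
        have hne2 : x' + t ≠ y' + t := by
          intro h
          have hxe : x' = y' := add_right_cancel h
          rw [hxe, sub_self] at hsub
          exact hab (by
            have := hsub.symm
            rwa [sub_eq_zero] at this)
        have hadj : circDist n (x' + t) (y' + t) ∈ S := by
          rw [circDist_add_right]
          exact hS'
        exact (indep_iff n S _).mp hL _ hx'' _ hy'' hne2 hadj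
      · intro hB
        rw [indep_iff] at hB ⊢
        intro x hx y hy hxy hdS
        by_cases hpxy : π x = π y
        · exact hbad x y hpxy hxy hdS
        · refine hB (π x) (mem_liftF.mp hx) (π y) (mem_liftF.mp hy) hpxy ?_
          exact ⟨x, y, hpxy, hdS, rfl⟩
    refine ⟨?_, ?_, ?_⟩
    · -- the congruence
      have hfilter : Finset.univ.filter (fun B : Finset (ZMod m) =>
            IsIndepSet' n S (liftF n m B))
          = Finset.univ.filter (fun B : Finset (ZMod m) =>
            IsIndepSet' m (derivedS n m S) B) := by
        ext B
        simp only [Finset.mem_filter, Finset.mem_univ, true_and]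
        exact hiff B
      have hq2 : qsum m (derivedS n m S) (w ^ p)
          = ∑ B ∈ Finset.univ.filter (fun B : Finset (ZMod m) =>
              IsIndepSet' n S (liftF n m B)), (w ^ p) ^ B.card := by
        rw [qsum, hfilter]
      rw [hq2, ← hfix]
      exact horb'
    · -- derived set is in the right range
      intro d hd
      obtain ⟨x, y, hne, _, hdist⟩ := hd
      have hb := circDist_bounds (m := m) (a := ((x.val : ZMod m))) (b := ((y.val : ZMod m))) hne
      rw [hdist] at hb
      exact Set.mem_Icc.mpr hb
    · -- derived set nonempty
      rintro ⟨s, hs⟩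
      have hs2 := hS hs
      rw [Set.mem_Icc] at hs2
      have hn1 : 0 < n := Nat.pos_of_ne_zero (NeZero.ne n)
      have hsn : s < n := by omega
      set y : ZMod n := (s : ZMod n) with hy
      have hyval : y.val = s := ZMod.val_cast_of_lt hsn
      have hy0 : y ≠ 0 := by
        intro h
        rw [h, ZMod.val_zero] at hyval
        omega
      haveI : NeZero y := ⟨hy0⟩
      have hcd : circDist n 0 y = s := by
        show min (0 - y).val (y - 0).val = s
        rw [zero_sub, sub_zero, ZMod.val_neg_of_ne_zero, hyval]
        exact min_eq_right (by omega)
      have hπ0y : π 0 ≠ π y := by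
        intro h
        exact hbad 0 y h (Ne.symm hy0) (by rw [hcd]; exact hs)
      exact ⟨circDist m (π 0) (π y), 0, y, hπ0y, by rw [hcd]; exact hs, rfl⟩

lemma sum_modEq {α : Type*} {s : Finset α} {f g : α → ℤ} {N : ℕ}
    (h : ∀ a ∈ s, f a ≡ g a [ZMOD N]) :
    (∑ a ∈ s, f a) ≡ ∑ a ∈ s, g a [ZMOD N] := by
  classical
  induction s using Finset.induction_on with
  | empty => rfl
  | insert x s hx ih =>
    rw [Finset.sum_insert hx, Finset.sum_insert hx]
    exact Int.ModEq.add (h _ (Finset.mem_insert_self _ _))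
      (ih fun a ha => h a (Finset.mem_insert_of_mem ha))

lemma qsum_modEq_two (n : ℕ) [NeZero n] (S : Set ℕ) :
    qsum n S (-1) ≡ qsum n S 1 [ZMOD 2] := by
  rw [qsum, qsum]
  apply sum_modEq
  intro A _
  exact Int.ModEq.pow A.card (by decide)

lemma qsum_two (w : ℤ) : qsum 2 {1} w = 1 + 2 * w := by
  classical
  have huniv : (Finset.univ : Finset (Finset (ZMod 2))) = {∅, {0}, {1}, {0, 1}} := by decide
  have hd : circDist 2 (0 : ZMod 2) 1 = 1 := by decide
  have hd' : circDist 2 (1 : ZMod 2) 0 = 1 := by decide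
  have h0 : IsIndepSet' 2 {1} (∅ : Finset (ZMod 2)) := by
    intro a ha
    exact absurd ha (Finset.notMem_empty a)
  have hsing : ∀ z : ZMod 2, IsIndepSet' 2 {1} ({z} : Finset (ZMod 2)) := by
    intro z a ha b hb hadj
    rw [Finset.mem_singleton] at ha hb
    rw [ha, hb] at hadj
    exact hadj.1 rfl
  have hc : ¬ IsIndepSet' 2 {1} ({0, 1} : Finset (ZMod 2)) := by
    intro h
    refine h 0 (by decide) 1 (by decide) ⟨by decide, ?_⟩
    rw [hd]
    rfl
  rw [qsum, huniv]
  rw [Finset.filter_insert, if_pos h0, Finset.filter_insert, if_pos (hsing 0),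
    Finset.filter_insert, if_pos (hsing 1), Finset.filter_singleton, if_neg hc]
  rw [Finset.sum_insert (by decide), Finset.sum_insert (by decide),
    Finset.sum_insert (by decide), Finset.sum_empty]
  simp
  ring

lemma pow_case (p : ℕ) (hp : p.Prime) (w : ℤ) (hw : w ^ p = w) :
    ∀ k, 0 < k → ∀ (n : ℕ) [NeZero n], n = p ^ k → ∀ S : Set ℕ,
      S ⊆ Set.Icc 1 (n / 2) → S.Nonempty → qsum n S w ≡ 1 [ZMOD p] := by
  intro k
  induction k with
  | zero => intro h; exact absurd h (lt_irrefl 0)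
  | succ k ih =>
    intro _ n _ hneq S hS hSne
    haveI : NeZero (p ^ k) := ⟨(pow_pos hp.pos k).ne'⟩
    have hnm : n = p ^ k * p := by rw [hneq, pow_succ]
    rcases step p (p ^ k) n hp hnm S hS w with h | ⟨hcong, hsub, hne⟩
    · exact h
    · rcases Nat.eq_zero_or_pos k with rfl | hk
      · exfalso
        obtain ⟨d, hd⟩ := hne hSne
        have hmem := hsub hd
        rw [Set.mem_Icc] at hmem
        simp only [pow_zero] at hmem
        omega
      · have hih := ih hk (p ^ k) rfl _ hsub (hne hSne)
        rw [hw] at hcong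
        exact hcong.trans hih

lemma two_case (p : ℕ) (hp : p.Prime) (w : ℤ) (hw : w ^ p = w) :
    ∀ k, ∀ (n : ℕ) [NeZero n], n = 2 * p ^ k → ∀ S : Set ℕ,
      S ⊆ Set.Icc 1 (n / 2) → S.Nonempty →
      (qsum n S w ≡ 1 [ZMOD p] ∨ qsum n S w ≡ 1 + 2 * w [ZMOD p]) := by
  intro k
  induction k with
  | zero =>
    intro n _ hneq S hS hSne
    have hn2 : n = 2 := by simpa using hneq
    subst hn2
    have hSeq : S = {1} := by
      have h1 : S ⊆ {1} := by
        intro s hs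
        have := hS hs
        rw [Set.mem_Icc] at this
        have : s = 1 := by omega
        rw [this]; rfl
      exact (Set.Nonempty.subset_singleton_iff hSne).mp h1
    subst hSeq
    right
    rw [qsum_two]
  | succ k ih =>
    intro n _ hneq S hS hSne
    haveI : NeZero (2 * p ^ k) := ⟨by have := hp.pos; positivity⟩
    have hnm : n = (2 * p ^ k) * p := by rw [hneq, pow_succ]; ring
    rcases step p (2 * p ^ k) n hp hnm S hS w with h | ⟨hcong, hsub, hne⟩
    · left; exact h
    · rw [hw] at hcong
      rcases ih (2 * p ^ k) rfl _ hsub (hne hSne) with h2 | h2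
      · left; exact hcong.trans h2
      · right; exact hcong.trans h2

lemma ne_zero_of_modEq {p : ℕ} (hp : 2 ≤ p) {q r : ℤ} (h : q ≡ r [ZMOD p])
    (hr1 : r = 1 ∨ r = -1) : q ≠ 0 := by
  rintro rfl
  have hdvd : (p : ℤ) ∣ r := (Int.modEq_zero_iff_dvd).mp h.symm
  rcases hr1 with rfl | rfl
  · have := Int.le_of_dvd one_pos hdvd
    have hh : (2 : ℤ) ≤ (p : ℤ) := by exact_mod_cast hp
    omega
  · have hdvd2 : (p : ℤ) ∣ 1 := (dvd_neg.mp hdvd)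
    have := Int.le_of_dvd one_pos hdvd2
    have hh : (2 : ℤ) ≤ (p : ℤ) := by exact_mod_cast hp
    omega

theorem stmt17 (p k n : ℕ) (hp : p.Prime) (hk : 0 < k)
    (hn : n = p ^ k ∨ (Odd p ∧ n = 2 * p ^ k))
    (S : Set ℕ) (hS : S ⊆ Set.Icc 1 (n / 2)) (hSne : S.Nonempty) :
    ∑ i ∈ Finset.range (n + 1), (indepCount n S i : ℤ) * (-1) ^ i ≠ 0 := by
  classical
  have hn0 : 0 < n := by
    have := hp.pos
    rcases hn with rfl | ⟨_, rfl⟩ <;> positivity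
  haveI : NeZero n := ⟨hn0.ne'⟩
  have hcount : ∀ i, indepCount n S i
      = ((Finset.univ.filter (fun A : Finset (ZMod n) => IsIndepSet' n S A)).filter
          (fun A => A.card = i)).card := by
    intro i
    rw [indepCount, Nat.card_eq_fintype_card, Fintype.card_subtype]
    congr 1
    ext A
    simp only [Finset.filter_filter, Finset.mem_filter, Finset.mem_univ, true_and]
    tauto
  have hsum : (∑ i ∈ Finset.range (n + 1), (indepCount n S i : ℤ) * (-1) ^ i)
      = qsum n S (-1) := by
    rw [qsum]
    have hmaps : ∀ A ∈ Finset.univ.filter (fun A : Finset (ZMod n) => IsIndepSet' n S A),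
        A.card ∈ Finset.range (n + 1) := by
      intro A _
      rw [Finset.mem_range]
      have h1 : A.card ≤ Fintype.card (ZMod n) := Finset.card_le_univ A
      rw [ZMod.card] at h1
      omega
    have hfib := Finset.sum_fiberwise_of_maps_to hmaps
      (fun A : Finset (ZMod n) => (-1 : ℤ) ^ A.card)
    rw [← hfib]
    apply Finset.sum_congr rfl
    intro i _
    have hterm : ∀ A ∈ (Finset.univ.filter
          (fun A : Finset (ZMod n) => IsIndepSet' n S A)).filter (fun A => A.card = i),
        ((-1 : ℤ)) ^ A.card = (-1) ^ i := by
      intro A hA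
      rw [(Finset.mem_filter.mp hA).2]
    rw [Finset.sum_congr rfl hterm, Finset.sum_const, nsmul_eq_mul, hcount i]
  rw [hsum]
  rcases hn with rfl | ⟨hodd, rfl⟩
  · by_cases hptwo : p = 2
    · subst hptwo
      have h1 := pow_case 2 hp 1 (by norm_num) k hk (2 ^ k) rfl S hS hSne
      have h2 := qsum_modEq_two (2 ^ k) S
      exact ne_zero_of_modEq hp.two_le (h2.trans h1) (Or.inl rfl)
    · have hodd : Odd p := hp.odd_of_ne_two hptwo
      have h1 := pow_case p hp (-1) (Odd.neg_one_pow hodd) k hk (p ^ k) rfl S hS hSne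
      exact ne_zero_of_modEq hp.two_le h1 (Or.inl rfl)
  · have h1 := two_case p hp (-1) (Odd.neg_one_pow hodd) k (2 * p ^ k) rfl S hS hSne
    rcases h1 with h | h
    · exact ne_zero_of_modEq hp.two_le h (Or.inl rfl)
    · have he : (1 : ℤ) + 2 * (-1) = -1 := by norm_num
      rw [he] at h
      exact ne_zero_of_modEq hp.two_le h (Or.inr rfl)
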